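/- Let U be a random variable bounded in absolute value by B, and let V̂ = (1/n)∑_{i=1}^n (U_i − Ū)² be the biased sample variance of n i.i.d. copies of U. Then for all γ > 0, P((n/(n−1)) V̂ ≥ Var(U) − γ) ≥ 1 − exp(−(n−1)γ²/(8B² Var(U))). -/

import Mathlib

open MeasureTheory ProbabilityTheory Finset

def MPa (n : ℕ) (k : Fin (n/2)) : Fin n := ⟨2*k, by have := k.isLt; omega⟩
def MPb (n : ℕ) (k : Fin (n/2)) : Fin n := ⟨2*k+1, by have := k.isLt; omega⟩

lemma MPa_ne_MPb (n : ℕ) (k : Fin (n/2)) : MPa n k ≠ MPb n k := by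
  simp [MPa, MPb, Fin.ext_iff]

lemma MP_exists_perm {n : ℕ} {i j i' j' : Fin n} (hij : i ≠ j) (hij' : i' ≠ j') :
    ∃ τ : Equiv.Perm (Fin n), τ i = i' ∧ τ j = j' := by
  classical
  have key : (Equiv.swap i i') j ≠ i' := by
    rcases eq_or_ne j i' with rfl | hji'
    · rw [Equiv.swap_apply_right]; exact hij
    · rw [Equiv.swap_apply_of_ne_of_ne (Ne.symm hij) hji']; exact hji'
  refine ⟨(Equiv.swap i i').trans (Equiv.swap ((Equiv.swap i i') j) j'), ?_, ?_⟩
  · simp only [Equiv.trans_apply, Equiv.swap_apply_left]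
    exact Equiv.swap_apply_of_ne_of_ne (Ne.symm key) hij'
  · simp only [Equiv.trans_apply, Equiv.swap_apply_left]

lemma MP_sum_perm_pair {n : ℕ} (u : Fin n → ℝ) {i j i' j' : Fin n}
    (hij : i ≠ j) (hij' : i' ≠ j') :
    ∑ σ : Equiv.Perm (Fin n), (u (σ i) - u (σ j))^2
      = ∑ σ : Equiv.Perm (Fin n), (u (σ i') - u (σ j'))^2 := by
  obtain ⟨τ, hτ1, hτ2⟩ := MP_exists_perm hij' hij
  refine Fintype.sum_equiv (Equiv.mulRight τ) _ _ fun σ => ?_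
  simp [Equiv.Perm.mul_apply, hτ1, hτ2]

lemma MP_double_sum_sq {n : ℕ} (u : Fin n → ℝ) :
    ∑ i, ∑ j, (u i - u j)^2 = 2*n*(∑ i, (u i)^2) - 2*(∑ i, u i)^2 := by
  simp only [sub_sq, Finset.sum_add_distrib, Finset.sum_sub_distrib, ← Finset.mul_sum,
    ← Finset.sum_mul, Finset.sum_const, card_univ, Fintype.card_fin, nsmul_eq_mul]
  ring

lemma MP_comb_identity {n : ℕ} (hn : 2 ≤ n) (u : Fin n → ℝ) :
    ((n:ℝ)*((n:ℝ)-1)) * ∑ σ : Equiv.Perm (Fin n), ∑ k : Fin (n/2),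
        (u (σ (MPa n k)) - u (σ (MPb n k)))^2
      = ((n/2 : ℕ) : ℝ) * (n.factorial : ℝ) *
        (2*n*(∑ i, (u i)^2) - 2*(∑ i, u i)^2) := by
  have h01 : (⟨0, by omega⟩ : Fin n) ≠ ⟨1, by omega⟩ := by simp [Fin.ext_iff]
  set i0 : Fin n := ⟨0, by omega⟩ with hi0
  set i1 : Fin n := ⟨1, by omega⟩ with hi1
  set S : ℝ := ∑ σ : Equiv.Perm (Fin n), (u (σ i0) - u (σ i1))^2 with hS
  have h1 : ∑ σ : Equiv.Perm (Fin n), ∑ k : Fin (n/2),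
      (u (σ (MPa n k)) - u (σ (MPb n k)))^2 = ((n/2 : ℕ) : ℝ) * S := by
    rw [Finset.sum_comm]
    rw [Finset.sum_congr rfl fun k _ => MP_sum_perm_pair u (MPa_ne_MPb n k) h01]
    simp [card_univ, nsmul_eq_mul]
    exact Or.inl rfl
  have key : ∀ i j : Fin n, ∑ σ : Equiv.Perm (Fin n), (u (σ i) - u (σ j))^2
      = if i = j then 0 else S := by
    intro i j
    split_ifs with h
    · subst h; simp
    · exact MP_sum_perm_pair u h h01
  have h2 : ∑ i, ∑ j, ∑ σ : Equiv.Perm (Fin n), (u (σ i) - u (σ j))^2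
      = (n : ℝ) * (((n:ℝ) - 1) * S) := by
    rw [Finset.sum_congr rfl fun i _ => Finset.sum_congr rfl fun j _ => key i j]
    have hrow : ∀ i : Fin n, ∑ j, (if i = j then (0:ℝ) else S) = ((n:ℝ) - 1) * S := by
      intro i
      have hsplit : ∀ j : Fin n, (if i = j then (0:ℝ) else S)
          = S - (if i = j then S else 0) := by
        intro j; split_ifs <;> ring
      simp only [hsplit, Finset.sum_sub_distrib, Finset.sum_const, card_univ,
        Fintype.card_fin, nsmul_eq_mul, Finset.sum_ite_eq, Finset.mem_univ, if_true]
      ring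
    rw [Finset.sum_congr rfl fun i _ => hrow i]
    simp [card_univ, nsmul_eq_mul]
  have h3 : ∑ i, ∑ j, ∑ σ : Equiv.Perm (Fin n), (u (σ i) - u (σ j))^2
      = (n.factorial : ℝ) * ∑ i, ∑ j, (u i - u j)^2 := by
    rw [Finset.sum_congr rfl fun i (_ : i ∈ univ) => Finset.sum_comm, Finset.sum_comm]
    have hper : ∀ σ : Equiv.Perm (Fin n),
        ∑ i, ∑ j, (u (σ i) - u (σ j))^2 = ∑ i, ∑ j, (u i - u j)^2 := by
      intro σ
      rw [Finset.sum_congr rfl fun i _ => Equiv.sum_comp σ (fun j => (u (σ i) - u j)^2)]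
      exact Equiv.sum_comp σ (fun i => ∑ j, (u i - u j)^2)
    rw [Finset.sum_congr rfl fun σ _ => hper σ]
    simp [card_univ, Fintype.card_perm, nsmul_eq_mul]
  have hD : ((n:ℝ) * (((n:ℝ) - 1) * S)) = (n.factorial : ℝ) * ∑ i, ∑ j, (u i - u j)^2 := by
    rw [← h2, h3]
  rw [h1, MP_double_sum_sq u] at *
  linear_combination ((n/2 : ℕ) : ℝ) * hD

lemma MP_sum_sub_mean {n : ℕ} (hn : 1 ≤ n) (u : Fin n → ℝ) :
    ∑ i, (u i - (∑ j, u j)/n)^2 = ∑ i, (u i)^2 - (∑ i, u i)^2/n := by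
  have hn0 : (n:ℝ) ≠ 0 := Nat.cast_ne_zero.mpr (by omega)
  simp only [sub_sq, Finset.sum_add_distrib, Finset.sum_sub_distrib, ← Finset.mul_sum,
    ← Finset.sum_mul, Finset.sum_const, card_univ, Fintype.card_fin, nsmul_eq_mul, div_pow]
  field_simp
  ring

lemma MP_stat_identity {n : ℕ} (hn : 2 ≤ n) (u : Fin n → ℝ) :
    ((n:ℝ) / ((n:ℝ) - 1)) * ((1 / (n:ℝ)) * ∑ i, (u i - (∑ j, u j)/n)^2)
      = (1 / (n.factorial : ℝ)) * ∑ σ : Equiv.Perm (Fin n),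
          (1 / ((n/2 : ℕ) : ℝ)) * ∑ k : Fin (n/2),
            (u (σ (MPa n k)) - u (σ (MPb n k)))^2 / 2 := by
  have hn0 : (n:ℝ) ≠ 0 := Nat.cast_ne_zero.mpr (by omega)
  have h2n : (2:ℝ) ≤ (n:ℝ) := by exact_mod_cast hn
  have hn1 : (n:ℝ) - 1 ≠ 0 := by nlinarith
  have hm0 : ((n/2:ℕ):ℝ) ≠ 0 := Nat.cast_ne_zero.mpr (by omega)
  have hf0 : (n.factorial:ℝ) ≠ 0 := Nat.cast_ne_zero.mpr n.factorial_ne_zero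
  have key := MP_comb_identity hn u
  have hq := MP_sum_sub_mean (by omega) u
  have hRHS : (∑ σ : Equiv.Perm (Fin n), (1 / ((n/2 : ℕ) : ℝ)) * ∑ k : Fin (n/2),
        (u (σ (MPa n k)) - u (σ (MPb n k)))^2 / 2)
      = (∑ σ : Equiv.Perm (Fin n), ∑ k : Fin (n/2),
          (u (σ (MPa n k)) - u (σ (MPb n k)))^2) / (((n/2:ℕ):ℝ) * 2) := by
    rw [Finset.sum_div]
    refine Finset.sum_congr rfl fun σ _ => ?_
    rw [← Finset.sum_div]
    ring
  rw [hq, hRHS]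
  have hP : (∑ σ : Equiv.Perm (Fin n), ∑ k : Fin (n/2),
        (u (σ (MPa n k)) - u (σ (MPb n k)))^2)
      = ((n/2 : ℕ) : ℝ) * (n.factorial : ℝ) *
          (2*n*(∑ i, (u i)^2) - 2*(∑ i, u i)^2) / ((n:ℝ)*((n:ℝ)-1)) := by
    rw [eq_div_iff (mul_ne_zero hn0 hn1)]
    linear_combination key
  rw [hP]
  field_simp


lemma MP_int_bound {Ω : Type*} [MeasurableSpace Ω] {μ : Measure Ω} [IsFiniteMeasure μ]
    {f : Ω → ℝ} (hf : AEStronglyMeasurable f μ) (C : ℝ) (h : ∀ᵐ ω ∂μ, |f ω| ≤ C) :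
    Integrable f μ :=
  (integrable_const C).mono' hf (by filter_upwards [h] with ω hω; simpa using hω)

lemma MP_exp_quad {y : ℝ} (hy : 0 ≤ y) : Real.exp (-y) ≤ 1 - y + y^2/2 := by
  have h1 := Real.quadratic_le_exp_of_nonneg hy
  have h2 : Real.exp (-y) * Real.exp y = 1 := by rw [← Real.exp_add]; simp
  have h3 := Real.exp_pos (-y)
  nlinarith [Real.exp_pos y, sq_nonneg (y*y), sq_nonneg y]

lemma MP_mgf_pair {Ω : Type*} [MeasurableSpace Ω] (μ : Measure Ω) [IsProbabilityMeasure μ]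
    {B M1 M2 : ℝ} (hB : 0 < B) {X Y : Ω → ℝ} (hXm : Measurable X) (hYm : Measurable Y)
    (hbX : ∀ᵐ ω ∂μ, |X ω| ≤ B) (hbY : ∀ᵐ ω ∂μ, |Y ω| ≤ B)
    (hXY : IndepFun X Y μ)
    (hX1 : ∫ ω, X ω ∂μ = M1) (hY1 : ∫ ω, Y ω ∂μ = M1)
    (hX2 : ∫ ω, (X ω)^2 ∂μ = M2) (hY2 : ∫ ω, (Y ω)^2 ∂μ = M2)
    {t : ℝ} (ht : 0 ≤ t) :
    ∫ ω, Real.exp (-t * ((X ω - Y ω)^2/2)) ∂μ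
      ≤ Real.exp (t^2 * B^2 * (M2 - M1^2) - t * (M2 - M1^2)) := by
  have hiX : Integrable X μ := MP_int_bound hXm.aestronglyMeasurable B hbX
  have hiX2 : Integrable (fun ω => (X ω)^2) μ := by
    refine MP_int_bound (hXm.pow_const 2).aestronglyMeasurable (B^2) ?_
    filter_upwards [hbX] with ω h
    rw [abs_pow]; exact pow_le_pow_left₀ (abs_nonneg _) h 2
  have hiY : Integrable Y μ := MP_int_bound hYm.aestronglyMeasurable B hbY
  have hiY2 : Integrable (fun ω => (Y ω)^2) μ := by
    refine MP_int_bound (hYm.pow_const 2).aestronglyMeasurable (B^2) ?_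
    filter_upwards [hbY] with ω h
    rw [abs_pow]; exact pow_le_pow_left₀ (abs_nonneg _) h 2
  have hiXY : Integrable (fun ω => X ω * Y ω) μ := by
    refine MP_int_bound (hXm.mul hYm).aestronglyMeasurable (B*B) ?_
    filter_upwards [hbX, hbY] with ω h1 h2
    rw [abs_mul]
    exact mul_le_mul h1 h2 (abs_nonneg _) hB.le
  have hXYint : ∫ ω, X ω * Y ω ∂μ = M1 * M1 := by
    rw [hXY.integral_fun_mul_eq_mul_integral hXm.aestronglyMeasurable hYm.aestronglyMeasurable, hX1, hY1]
  have hd2 : ∫ ω, (X ω - Y ω)^2 ∂μ = 2*(M2 - M1^2) := by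
    have h1 : Integrable (fun ω => X ω^2 + Y ω^2) μ := hiX2.add hiY2
    have h2 : Integrable (fun ω => 2*(X ω*Y ω)) μ := hiXY.const_mul 2
    have e1 : ∫ ω, (X ω - Y ω)^2 ∂μ = ∫ ω, ((X ω^2 + Y ω^2) - 2*(X ω*Y ω)) ∂μ := by
      apply integral_congr_ae; filter_upwards with ω; ring
    have e2 : ∫ ω, ((X ω^2 + Y ω^2) - 2*(X ω*Y ω)) ∂μ
        = (∫ ω, (X ω^2 + Y ω^2) ∂μ) - ∫ ω, 2*(X ω*Y ω) ∂μ := integral_sub h1 h2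
    have e3 : ∫ ω, (X ω^2 + Y ω^2) ∂μ = (∫ ω, X ω^2 ∂μ) + ∫ ω, Y ω^2 ∂μ :=
      integral_add hiX2 hiY2
    have e4 : ∫ ω, 2*(X ω*Y ω) ∂μ = 2 * ∫ ω, X ω*Y ω ∂μ := integral_const_mul 2 _
    rw [e1, e2, e3, e4, hX2, hY2, hXYint]; ring
  -- second moment bound
  have hiD2 : Integrable (fun ω => (X ω - Y ω)^2) μ := by
    refine MP_int_bound ((hXm.sub hYm).pow_const 2).aestronglyMeasurable ((2*B)^2) ?_
    filter_upwards [hbX, hbY] with ω h1 h2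
    rw [abs_pow]
    refine pow_le_pow_left₀ (abs_nonneg _) ?_ 2
    calc |X ω - Y ω| ≤ |X ω| + |Y ω| := abs_sub _ _
      _ ≤ 2*B := by linarith
  have hiD4 : Integrable (fun ω => ((X ω - Y ω)^2/2)^2) μ := by
    refine MP_int_bound ?_ (((2*B)^2/2)^2) ?_
    · exact ((((hXm.sub hYm).pow_const 2).div_const 2).pow_const 2).aestronglyMeasurable
    · filter_upwards [hbX, hbY] with ω h1 h2
      have hd : |X ω - Y ω| ≤ 2*B := by
        calc |X ω - Y ω| ≤ |X ω| + |Y ω| := abs_sub _ _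
          _ ≤ 2*B := by linarith
      have : (X ω - Y ω)^2 ≤ (2*B)^2 := by
        rw [← sq_abs]; exact pow_le_pow_left₀ (abs_nonneg _) hd 2
      rw [abs_of_nonneg (by positivity)]
      have h0 : (0:ℝ) ≤ (X ω - Y ω)^2/2 := by positivity
      exact pow_le_pow_left₀ h0 (by linarith) 2
  have hm2 : ∫ ω, ((X ω - Y ω)^2/2)^2 ∂μ ≤ B^2 * (2*(M2 - M1^2)) := by
    rw [← hd2, ← integral_const_mul]
    refine integral_mono_ae hiD4 (hiD2.const_mul _) ?_
    filter_upwards [hbX, hbY] with ω h1 h2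
    have hd : |X ω - Y ω| ≤ 2*B := by
      calc |X ω - Y ω| ≤ |X ω| + |Y ω| := abs_sub _ _
        _ ≤ 2*B := by linarith
    have h4 : (X ω - Y ω)^2 ≤ 4*B^2 := by
      have := pow_le_pow_left₀ (abs_nonneg (X ω - Y ω)) hd 2
      rw [sq_abs] at this; nlinarith
    nlinarith [sq_nonneg (X ω - Y ω)]
  -- exp bound
  have hW : ∀ ω, (0:ℝ) ≤ (X ω - Y ω)^2/2 := fun ω => by positivity
  have hptw : ∀ᵐ ω ∂μ, Real.exp (-t * ((X ω - Y ω)^2/2))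
      ≤ 1 - t*((X ω - Y ω)^2/2) + t^2*((X ω - Y ω)^2/2)^2/2 := by
    filter_upwards with ω
    have hy : 0 ≤ t * ((X ω - Y ω)^2/2) := mul_nonneg ht (hW ω)
    have := MP_exp_quad hy
    calc Real.exp (-t * ((X ω - Y ω)^2/2)) = Real.exp (-(t * ((X ω - Y ω)^2/2))) := by ring_nf
      _ ≤ 1 - t*((X ω - Y ω)^2/2) + (t*((X ω - Y ω)^2/2))^2/2 := this
      _ = 1 - t*((X ω - Y ω)^2/2) + t^2*((X ω - Y ω)^2/2)^2/2 := by ring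
  have hiexp : Integrable (fun ω => Real.exp (-t * ((X ω - Y ω)^2/2))) μ := by
    refine MP_int_bound ?_ 1 ?_
    · exact (Real.measurable_exp.comp
        ((((hXm.sub hYm).pow_const 2).div_const 2).const_mul (-t))).aestronglyMeasurable
    · filter_upwards with ω
      rw [abs_of_nonneg (Real.exp_pos _).le, Real.exp_le_one_iff]
      have := hW ω
      nlinarith
  have hiRHS : Integrable (fun ω => 1 - t*((X ω - Y ω)^2/2) + t^2*((X ω - Y ω)^2/2)^2/2) μ :=
    ((integrable_const 1).sub ((hiD2.div_const 2).const_mul t)).add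
      ((hiD4.const_mul (t^2)).div_const 2)
  have hWint : ∫ ω, (X ω - Y ω)^2/2 ∂μ = M2 - M1^2 := by rw [integral_div, hd2]; ring
  have hstep1 : ∫ ω, Real.exp (-t * ((X ω - Y ω)^2/2)) ∂μ
      ≤ 1 - t*(M2 - M1^2) + t^2*(B^2*(2*(M2 - M1^2)))/2 := by
    calc ∫ ω, Real.exp (-t * ((X ω - Y ω)^2/2)) ∂μ
        ≤ ∫ ω, (1 - t*((X ω - Y ω)^2/2) + t^2*((X ω - Y ω)^2/2)^2/2) ∂μ :=
          integral_mono_ae hiexp hiRHS hptw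
      _ = 1 - t*(M2 - M1^2) + t^2*(∫ ω, ((X ω - Y ω)^2/2)^2 ∂μ)/2 := by
          have i1 : Integrable (fun ω => 1 - t*((X ω - Y ω)^2/2)) μ :=
            (integrable_const 1).sub ((hiD2.div_const 2).const_mul t)
          have i2 : Integrable (fun ω => t^2*((X ω - Y ω)^2/2)^2/2) μ :=
            ((hiD4.const_mul (t^2)).div_const 2)
          have e1 : ∫ ω, (1 - t*((X ω - Y ω)^2/2) + t^2*((X ω - Y ω)^2/2)^2/2) ∂μ
              = (∫ ω, (1 - t*((X ω - Y ω)^2/2)) ∂μ) + ∫ ω, t^2*((X ω - Y ω)^2/2)^2/2 ∂μ :=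
            integral_add i1 i2
          have e2 : ∫ ω, (1 - t*((X ω - Y ω)^2/2)) ∂μ
              = (∫ _ω, (1:ℝ) ∂μ) - ∫ ω, t*((X ω - Y ω)^2/2) ∂μ :=
            integral_sub (integrable_const 1) ((hiD2.div_const 2).const_mul t)
          have e3 : ∫ ω, t*((X ω - Y ω)^2/2) ∂μ = t * (M2 - M1^2) := by
            rw [integral_const_mul, hWint]
          have e4 : ∫ ω, t^2*((X ω - Y ω)^2/2)^2/2 ∂μ
              = t^2*(∫ ω, ((X ω - Y ω)^2/2)^2 ∂μ)/2 := by
            rw [integral_div, integral_const_mul]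
          rw [e1, e2, e3, e4]
          simp
      _ ≤ 1 - t*(M2 - M1^2) + t^2*(B^2*(2*(M2 - M1^2)))/2 := by nlinarith [sq_nonneg t]
  calc ∫ ω, Real.exp (-t * ((X ω - Y ω)^2/2)) ∂μ
      ≤ 1 - t*(M2 - M1^2) + t^2*(B^2*(2*(M2 - M1^2)))/2 := hstep1
    _ ≤ 1 + (t^2 * B^2 * (M2 - M1^2) - t * (M2 - M1^2)) := by nlinarith [sq_nonneg t]
    _ ≤ Real.exp (t^2 * B^2 * (M2 - M1^2) - t * (M2 - M1^2)) := by
        linarith [Real.add_one_le_exp (t^2 * B^2 * (M2 - M1^2) - t * (M2 - M1^2))]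

lemma MP_matching_bound {Ω : Type*} [MeasurableSpace Ω] (μ : Measure Ω) [IsProbabilityMeasure μ]
    (n : ℕ) {B M1 M2 : ℝ} (hB : 0 < B)
    (U : Fin n → Ω → ℝ) (hmeas : ∀ i, Measurable (U i))
    (hbound : ∀ i, ∀ᵐ ω ∂μ, |U i ω| ≤ B)
    (hindep : iIndepFun U μ)
    (hM1 : ∀ i, ∫ ω, U i ω ∂μ = M1) (hM2 : ∀ i, ∫ ω, (U i ω)^2 ∂μ = M2)
    {t : ℝ} (ht : 0 ≤ t) (σ : Equiv.Perm (Fin n)) (s : Finset (Fin (n/2))) :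
    ∫ ω, Real.exp (-t * ∑ k ∈ s, (U (σ (MPa n k)) ω - U (σ (MPb n k)) ω)^2/2) ∂μ
      ≤ Real.exp (s.card * (t^2*B^2*(M2 - M1^2) - t*(M2 - M1^2))) := by
  classical
  induction s using Finset.induction_on with
  | empty => simp
  | insert k s hk ih =>
    -- notation
    set W : Fin (n/2) → Ω → ℝ :=
      fun j ω => (U (σ (MPa n j)) ω - U (σ (MPb n j)) ω)^2/2 with hW
    have hWmeas : ∀ j, Measurable (W j) := fun j =>
      (((hmeas _).sub (hmeas _)).pow_const 2).div_const 2
    have hWnn : ∀ j ω, 0 ≤ W j ω := fun j ω => by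
      simp only [hW]; positivity
    -- independence of exp(-t W k) and exp(-t ∑_{j∈s} W j)
    have hindep2 : IndepFun (fun ω => Real.exp (-t * W k ω))
        (fun ω => Real.exp (-t * ∑ j ∈ s, W j ω)) μ := by
      set S : Finset (Fin n) := {σ (MPa n k), σ (MPb n k)} with hSdef
      set T : Finset (Fin n) := s.biUnion (fun j => {σ (MPa n j), σ (MPb n j)}) with hTdef
      have hST : Disjoint S T := by
        rw [Finset.disjoint_left]
        intro x hxS hxT
        simp only [hSdef, Finset.mem_insert, Finset.mem_singleton] at hxS
        rw [hTdef, Finset.mem_biUnion] at hxT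
        obtain ⟨j, hjs, hxj⟩ := hxT
        simp only [Finset.mem_insert, Finset.mem_singleton] at hxj
        have hjk : j ≠ k := fun h => hk (h ▸ hjs)
        have hjk' : (j:ℕ) ≠ (k:ℕ) := fun h => hjk (Fin.ext h)
        rcases hxS with h1 | h1 <;> rcases hxj with h2 | h2 <;>
          · have := σ.injective (h1.symm.trans h2)
            simp only [MPa, MPb, Fin.mk.injEq, Fin.ext_iff] at this
            omega
      have base := hindep.indepFun_finset S T hST hmeas
      have hmemSa : σ (MPa n k) ∈ S := by simp [hSdef]
      have hmemSb : σ (MPb n k) ∈ S := by simp [hSdef]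
      have hmemTa : ∀ j ∈ s, σ (MPa n j) ∈ T := fun j hj => by
        rw [hTdef, Finset.mem_biUnion]; exact ⟨j, hj, by simp⟩
      have hmemTb : ∀ j ∈ s, σ (MPb n j) ∈ T := fun j hj => by
        rw [hTdef, Finset.mem_biUnion]; exact ⟨j, hj, by simp⟩
      set φ : ((i : S) → ℝ) → ℝ := fun v =>
        Real.exp (-t * ((v ⟨σ (MPa n k), hmemSa⟩ - v ⟨σ (MPb n k), hmemSb⟩)^2/2)) with hφdef
      set ψ : ((i : T) → ℝ) → ℝ := fun v =>
        Real.exp (-t * ∑ j ∈ s.attach,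
          (v ⟨σ (MPa n j.1), hmemTa j.1 j.2⟩ - v ⟨σ (MPb n j.1), hmemTb j.1 j.2⟩)^2/2) with hψdef
      have hφm : Measurable φ := by
        rw [hφdef]
        apply Real.measurable_exp.comp
        apply Measurable.const_mul
        exact (((measurable_pi_apply (⟨σ (MPa n k), hmemSa⟩ : S)).sub
          (measurable_pi_apply (⟨σ (MPb n k), hmemSb⟩ : S))).pow_const 2).div_const 2
      have hψm : Measurable ψ := by
        rw [hψdef]
        apply Real.measurable_exp.comp
        apply Measurable.const_mul
        apply Finset.measurable_sum
        intro j _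
        exact (((measurable_pi_apply (⟨σ (MPa n j.1), hmemTa j.1 j.2⟩ : T)).sub
          (measurable_pi_apply (⟨σ (MPb n j.1), hmemTb j.1 j.2⟩ : T))).pow_const 2).div_const 2
      have hcomp := base.comp hφm hψm
      have e1 : (φ ∘ fun ω (i : S) => U i ω) = fun ω => Real.exp (-t * W k ω) := rfl
      have e2 : (ψ ∘ fun ω (i : T) => U i ω) = fun ω => Real.exp (-t * ∑ j ∈ s, W j ω) := by
        funext ω
        simp only [Function.comp_apply, hψdef]
        congr 1
        congr 1
        exact Finset.sum_attach s fun j => (U (σ (MPa n j)) ω - U (σ (MPb n j)) ω)^2/2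
      rwa [e1, e2] at hcomp
    -- split the integral
    have hsum : ∀ ω, Real.exp (-t * ∑ j ∈ insert k s, W j ω)
        = Real.exp (-t * W k ω) * Real.exp (-t * ∑ j ∈ s, W j ω) := by
      intro ω
      rw [Finset.sum_insert hk, ← Real.exp_add]
      congr 1; ring
    have hint1 : AEStronglyMeasurable (fun ω => Real.exp (-t * W k ω)) μ :=
      (Real.measurable_exp.comp ((hWmeas k).const_mul (-t))).aestronglyMeasurable
    have hint2 : AEStronglyMeasurable (fun ω => Real.exp (-t * ∑ j ∈ s, W j ω)) μ := by
      apply Measurable.aestronglyMeasurable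
      apply Real.measurable_exp.comp
      exact ((Finset.measurable_sum s fun j _ => hWmeas j).const_mul (-t))
    have hmul := hindep2.integral_fun_mul_eq_mul_integral hint1 hint2
    have hpair : ∫ ω, Real.exp (-t * W k ω) ∂μ
        ≤ Real.exp (t^2*B^2*(M2 - M1^2) - t*(M2 - M1^2)) := by
      have hne : σ (MPa n k) ≠ σ (MPb n k) := fun h => MPa_ne_MPb n k (σ.injective h)
      exact MP_mgf_pair μ hB (hmeas _) (hmeas _) (hbound _) (hbound _)
        (hindep.indepFun hne) (hM1 _) (hM1 _) (hM2 _) (hM2 _) ht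
    calc ∫ ω, Real.exp (-t * ∑ j ∈ insert k s, W j ω) ∂μ
        = ∫ ω, Real.exp (-t * W k ω) * Real.exp (-t * ∑ j ∈ s, W j ω) ∂μ := by
          apply integral_congr_ae; filter_upwards with ω; exact hsum ω
      _ = (∫ ω, Real.exp (-t * W k ω) ∂μ) * ∫ ω, Real.exp (-t * ∑ j ∈ s, W j ω) ∂μ := hmul
      _ ≤ Real.exp (t^2*B^2*(M2 - M1^2) - t*(M2 - M1^2))
            * Real.exp (s.card * (t^2*B^2*(M2 - M1^2) - t*(M2 - M1^2))) := by
          apply mul_le_mul hpair ih (integral_nonneg fun ω => (Real.exp_pos _).le)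
            (Real.exp_pos _).le
      _ = Real.exp (((insert k s).card : ℝ) * (t^2*B^2*(M2 - M1^2) - t*(M2 - M1^2))) := by
          rw [← Real.exp_add, Finset.card_insert_of_notMem hk]
          push_cast
          ring_nf


set_option maxHeartbeats 2000000 in
theorem maurer_pontil_variance_lower_tail {Ω : Type*} [MeasurableSpace Ω] (μ : Measure Ω)
    [IsProbabilityMeasure μ] (n : ℕ) (hn : 2 ≤ n) (B : ℝ) (hB : 0 < B)
    (U : Fin n → Ω → ℝ) (U₀ : Ω → ℝ)
    (hmeas : ∀ i, Measurable (U i))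
    (hbound : ∀ i, ∀ᵐ ω ∂μ, |U i ω| ≤ B)
    (hident : ∀ i, IdentDistrib (U i) U₀ μ μ)
    (hindep : iIndepFun U μ)
    (hvar : 0 < variance U₀ μ)
    (γ : ℝ) (hγ : 0 < γ) :
    ENNReal.ofReal
        (1 - Real.exp (-((n : ℝ) - 1) * γ ^ 2 / (8 * B ^ 2 * variance U₀ μ))) ≤
      μ {ω | ((n : ℝ) / ((n : ℝ) - 1)) *
            ((1 / (n : ℝ)) * ∑ i, (U i ω - (∑ j, U j ω) / n) ^ 2)
          ≥ variance U₀ μ - γ} := by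
  classical
  set v : ℝ := variance U₀ μ with hvdef
  have hvpos : 0 < v := hvar
  have hmR : 1 ≤ n/2 := by omega
  set m : ℕ := n/2 with hmdef
  have hmpos : (0:ℝ) < (m:ℝ) := by exact_mod_cast hmR
  have hn1 : (0:ℝ) < (n:ℝ) - 1 := by
    have : (2:ℝ) ≤ (n:ℝ) := by exact_mod_cast hn
    linarith
  have hf0 : (0:ℝ) < (n.factorial:ℝ) := by exact_mod_cast n.factorial_pos
  set i0 : Fin n := ⟨0, by omega⟩ with hi0
  set M1 : ℝ := ∫ ω, U i0 ω ∂μ with hM1def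
  set M2 : ℝ := ∫ ω, (U i0 ω)^2 ∂μ with hM2def
  have hM1 : ∀ i, ∫ ω, U i ω ∂μ = M1 := fun i =>
    ((hident i).integral_eq).trans (hident i0).integral_eq.symm
  have hM2 : ∀ i, ∫ ω, (U i ω)^2 ∂μ = M2 := fun i =>
    (((hident i).comp (measurable_id.pow_const 2)).integral_eq).trans
      ((hident i0).comp (measurable_id.pow_const 2)).integral_eq.symm
  have hvarMM : v = M2 - M1^2 := by
    have hviU : variance (U i0) μ = v := (hident i0).variance_eq
    have hmem : MemLp (U i0) 2 μ := by
      refine MemLp.of_bound (hmeas i0).aestronglyMeasurable B ?_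
      filter_upwards [hbound i0] with ω h
      simpa using h
    have e2 : (μ[(U i0)^2] : ℝ) = M2 := hM2 i0
    have e1 : (μ[U i0] : ℝ) = M1 := hM1 i0
    rw [← hviU, variance_eq_sub hmem, e2, e1]
  -- the statistic
  set V : Ω → ℝ := fun ω => ((n : ℝ) / ((n : ℝ) - 1)) *
      ((1 / (n : ℝ)) * ∑ i, (U i ω - (∑ j, U j ω) / n) ^ 2) with hVdef
  have hsummeas : Measurable fun ω => ∑ j, U j ω :=
    Finset.measurable_sum _ fun j _ => hmeas j
  have hVmeas : Measurable V := by
    rw [hVdef]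
    apply Measurable.const_mul
    apply Measurable.const_mul
    exact Finset.measurable_sum _ fun i _ =>
      ((hmeas i).sub (hsummeas.div_const _)).pow_const 2
  have hVnn : ∀ ω, 0 ≤ V ω := fun ω => by
    apply mul_nonneg (div_nonneg (by positivity) hn1.le)
    exact mul_nonneg (by positivity) (Finset.sum_nonneg fun i _ => sq_nonneg _)
  -- matching statistics
  set T : Equiv.Perm (Fin n) → Ω → ℝ := fun σ ω => (1/((m:ℕ):ℝ)) *
      ∑ k : Fin (n/2), (U (σ (MPa n k)) ω - U (σ (MPb n k)) ω)^2/2 with hTdef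
  have hJ : ∀ ω, V ω = (1/(n.factorial:ℝ)) * ∑ σ : Equiv.Perm (Fin n), T σ ω := fun ω =>
    MP_stat_identity hn (fun i => U i ω)
  have hTnn : ∀ σ ω, 0 ≤ T σ ω := fun σ ω => by
    apply mul_nonneg (by positivity)
    exact Finset.sum_nonneg fun k _ => by positivity
  have hTmeas : ∀ σ, Measurable (T σ) := fun σ => by
    apply Measurable.const_mul
    exact Finset.measurable_sum _ fun k _ =>
      (((hmeas _).sub (hmeas _)).pow_const 2).div_const 2
  -- parameters
  set t0 : ℝ := γ * m / (2*B^2*v) with ht0def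
  have ht0pos : 0 < t0 := by
    apply div_pos (mul_pos hγ hmpos); positivity
  set c : ℝ := (t0/m)^2*B^2*(M2 - M1^2) - (t0/m)*(M2 - M1^2) with hcdef
  -- per-matching bound
  have hTbound : ∀ σ : Equiv.Perm (Fin n),
      ∫ ω, Real.exp (-t0 * T σ ω) ∂μ ≤ Real.exp (m * c) := by
    intro σ
    have hb := MP_matching_bound μ n hB U hmeas hbound hindep hM1 hM2
      (t := t0/m) (div_pos ht0pos hmpos).le σ Finset.univ
    have heq : ∀ ω, -t0 * T σ ω
        = -(t0/m) * ∑ k : Fin (n/2), (U (σ (MPa n k)) ω - U (σ (MPb n k)) ω)^2/2 := by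
      intro ω
      rw [hTdef]
      field_simp
    have : ∫ ω, Real.exp (-t0 * T σ ω) ∂μ
        = ∫ ω, Real.exp (-(t0/m) *
            ∑ k : Fin (n/2), (U (σ (MPa n k)) ω - U (σ (MPb n k)) ω)^2/2) ∂μ := by
      apply integral_congr_ae; filter_upwards with ω; rw [heq ω]
    rw [this]
    calc ∫ ω, Real.exp (-(t0/m) *
            ∑ k : Fin (n/2), (U (σ (MPa n k)) ω - U (σ (MPb n k)) ω)^2/2) ∂μ
        ≤ Real.exp ((Finset.univ : Finset (Fin (n/2))).card *
            ((t0/m)^2*B^2*(M2 - M1^2) - (t0/m)*(M2 - M1^2))) := hb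
      _ = Real.exp (m * c) := by
          rw [hcdef]
          congr 2
          simp [Finset.card_univ]
          exact hmdef.symm
  have hwsum : ∑ _σ : Equiv.Perm (Fin n), (1/(n.factorial:ℝ)) = 1 := by
    rw [Finset.sum_const, Finset.card_univ, Fintype.card_perm, Fintype.card_fin, nsmul_eq_mul]
    field_simp
  -- Jensen
  have hjen : ∀ ω, Real.exp (-t0 * V ω)
      ≤ ∑ σ : Equiv.Perm (Fin n), (1/(n.factorial:ℝ)) * Real.exp (-t0 * T σ ω) := by
    intro ω
    have happ := convexOn_exp.map_sum_le (t := Finset.univ)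
      (w := fun _ : Equiv.Perm (Fin n) => (1/(n.factorial:ℝ)))
      (p := fun σ => -t0 * T σ ω)
      (fun _ _ => by positivity) hwsum (fun _ _ => Set.mem_univ _)
    have hc : ∑ σ : Equiv.Perm (Fin n), (1/(n.factorial:ℝ)) • (-t0 * T σ ω)
        = -t0 * V ω := by
      simp only [smul_eq_mul]
      rw [hJ ω, Finset.mul_sum, Finset.mul_sum]
      exact Finset.sum_congr rfl fun σ _ => by ring
    rw [hc] at happ
    exact happ
  -- integrability
  have hTint : ∀ σ, Integrable (fun ω => Real.exp (-t0 * T σ ω)) μ := by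
    intro σ
    refine MP_int_bound
      (Real.measurable_exp.comp ((hTmeas σ).const_mul (-t0))).aestronglyMeasurable 1 ?_
    filter_upwards with ω
    rw [abs_of_nonneg (Real.exp_pos _).le, Real.exp_le_one_iff]
    have := hTnn σ ω
    nlinarith [ht0pos]
  have hVexp_int : Integrable (fun ω => Real.exp (-t0 * V ω)) μ := by
    refine MP_int_bound
      (Real.measurable_exp.comp (hVmeas.const_mul (-t0))).aestronglyMeasurable 1 ?_
    filter_upwards with ω
    rw [abs_of_nonneg (Real.exp_pos _).le, Real.exp_le_one_iff]
    have := hVnn ω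
    nlinarith [ht0pos]
  -- integral Jensen
  have hfinal : ∫ ω, Real.exp (-t0 * V ω) ∂μ ≤ Real.exp (m * c) := by
    calc ∫ ω, Real.exp (-t0 * V ω) ∂μ
        ≤ ∫ ω, (∑ σ : Equiv.Perm (Fin n), (1/(n.factorial:ℝ)) * Real.exp (-t0 * T σ ω)) ∂μ := by
          refine integral_mono hVexp_int ?_ hjen
          exact integrable_finset_sum _ fun σ _ => (hTint σ).const_mul _
      _ = ∑ σ : Equiv.Perm (Fin n), ∫ ω, (1/(n.factorial:ℝ)) * Real.exp (-t0 * T σ ω) ∂μ :=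
          integral_finset_sum _ fun σ _ => (hTint σ).const_mul _
      _ = ∑ σ : Equiv.Perm (Fin n), (1/(n.factorial:ℝ)) * ∫ ω, Real.exp (-t0 * T σ ω) ∂μ := by
          exact Finset.sum_congr rfl fun σ _ => integral_const_mul _ _
      _ ≤ ∑ σ : Equiv.Perm (Fin n), (1/(n.factorial:ℝ)) * Real.exp (m * c) := by
          refine Finset.sum_le_sum fun σ _ => ?_
          exact mul_le_mul_of_nonneg_left (hTbound σ) (by positivity)
      _ = Real.exp (m * c) := by
          rw [← Finset.sum_mul, hwsum, one_mul]
  clear_value v M1 M2 m t0 c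
  -- Chernoff
  set X : Ω → ℝ := fun ω => v - V ω with hXdef
  have hXint : Integrable (fun ω => Real.exp (t0 * X ω)) μ := by
    refine MP_int_bound
      (Real.measurable_exp.comp ((measurable_const.sub hVmeas).const_mul t0)).aestronglyMeasurable
      (Real.exp (t0 * v)) ?_
    filter_upwards with ω
    rw [abs_of_nonneg (Real.exp_pos _).le, Real.exp_le_exp]
    show t0 * (v - V ω) ≤ t0 * v
    nlinarith [mul_nonneg ht0pos.le (hVnn ω)]
  have hch := measure_ge_le_exp_mul_mgf (μ := μ) (X := X) γ ht0pos.le hXint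
  have hmgf : mgf X μ t0 ≤ Real.exp (t0*v) * Real.exp (m * c) := by
    have e1 : mgf X μ t0 = ∫ ω, Real.exp (t0 * X ω) ∂μ := rfl
    have e2 : ∫ ω, Real.exp (t0 * X ω) ∂μ
        = ∫ ω, Real.exp (t0 * v) * Real.exp (-t0 * V ω) ∂μ := by
      apply integral_congr_ae; filter_upwards with ω
      rw [← Real.exp_add, hXdef]
      congr 1; ring
    rw [e1, e2, integral_const_mul]
    exact mul_le_mul_of_nonneg_left hfinal (Real.exp_pos _).le
  have hm2n : ((n:ℝ) - 1) ≤ 2*(m:ℝ) := by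
    have hnat : n ≤ 2*(n/2)+1 := by omega
    have : (n:ℝ) ≤ 2*(m:ℝ)+1 := by rw [hmdef]; exact_mod_cast hnat
    linarith
  have hmc : (m:ℝ)*c = t0^2*B^2*v/m - t0*v := by
    rw [hcdef, ← hvarMM]
    field_simp
  have hkey : -t0*γ + (t0*v + (m:ℝ)*c) ≤ -((n:ℝ)-1)*γ^2/(8*B^2*v) := by
    rw [hmc]
    have e : -t0*γ + (t0*v + (t0^2*B^2*v/m - t0*v)) = -(γ^2*(m:ℝ))/(4*B^2*v) := by
      rw [ht0def]
      field_simp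
      ring
    rw [e, div_le_div_iff₀ (by positivity) (by positivity)]
    have hx : 0 ≤ (2*(m:ℝ) - ((n:ℝ)-1)) * (γ^2*(B^2*v)) := by
      apply mul_nonneg (by linarith) (by positivity)
    nlinarith [hx]
  have hchain : (μ {ω | γ ≤ X ω}).toReal ≤ Real.exp (-((n:ℝ)-1)*γ^2/(8*B^2*v)) := by
    calc (μ {ω | γ ≤ X ω}).toReal ≤ Real.exp (-t0*γ) * mgf X μ t0 := hch
      _ ≤ Real.exp (-t0*γ) * (Real.exp (t0*v) * Real.exp (m * c)) :=
          mul_le_mul_of_nonneg_left hmgf (Real.exp_pos _).le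
      _ = Real.exp (-t0*γ + (t0*v + (m:ℝ)*c)) := by
          rw [← Real.exp_add, ← Real.exp_add]
      _ ≤ Real.exp (-((n:ℝ)-1)*γ^2/(8*B^2*v)) := Real.exp_le_exp.mpr hkey
  have hup : μ {ω | γ ≤ X ω} ≤ ENNReal.ofReal (Real.exp (-((n:ℝ)-1)*γ^2/(8*B^2*v))) := by
    rw [← ENNReal.ofReal_toReal (measure_ne_top μ _)]
    exact ENNReal.ofReal_le_ofReal hchain
  have hA : MeasurableSet {ω | v - γ ≤ V ω} := measurableSet_le measurable_const hVmeas
  have hsub : {ω | v - γ ≤ V ω}ᶜ ⊆ {ω | γ ≤ X ω} := by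
    intro ω hω
    simp only [Set.mem_compl_iff, Set.mem_setOf_eq, not_le] at hω ⊢
    show γ ≤ v - V ω
    linarith
  have hcompl : μ {ω | v - γ ≤ V ω}ᶜ ≤ ENNReal.ofReal (Real.exp (-((n:ℝ)-1)*γ^2/(8*B^2*v))) :=
    le_trans (measure_mono hsub) hup
  have hsum1 : μ {ω | v - γ ≤ V ω} + μ {ω | v - γ ≤ V ω}ᶜ = 1 := prob_add_prob_compl hA
  show ENNReal.ofReal (1 - Real.exp (-((n:ℝ)-1)*γ^2/(8*B^2*v))) ≤ μ {ω | v - γ ≤ V ω}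
  calc ENNReal.ofReal (1 - Real.exp (-((n:ℝ)-1)*γ^2/(8*B^2*v)))
      = 1 - ENNReal.ofReal (Real.exp (-((n:ℝ)-1)*γ^2/(8*B^2*v))) := by
        rw [ENNReal.ofReal_sub 1 (Real.exp_nonneg _), ENNReal.ofReal_one]
    _ ≤ 1 - μ {ω | v - γ ≤ V ω}ᶜ := tsub_le_tsub_left hcompl 1
    _ ≤ μ {ω | v - γ ≤ V ω} := by
        rw [← hsum1, ENNReal.add_sub_cancel_right (measure_ne_top μ _)]
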